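/- Let X be the set [0,1] × {0,1} endowed with the order topology of the lexicographic order. For a set A ⊆ X write A⁺ = {x ∈ [0,1] : (x,1) ∈ A} and A⁻ = {x ∈ [0,1] : (x,0) ∈ A}. Then for every open set A in X, the symmetric difference A⁺ Δ A⁻ is a countable set. -/

import Mathlib

open scoped symmDiff

open Set

/-- A set each of whose points is isolated from the right (with a nonempty gap)
is countable in a second countable order topology. -/
theorem aux_countable_right {α : Type*} [LinearOrder α] [TopologicalSpace α] [OrderTopology α]
    [SecondCountableTopology α] (S : Set α)
    (h : ∀ x ∈ S, ∃ b, x < b ∧ Set.Ioo x b ∩ S = ∅ ∧ (Set.Ioo x b).Nonempty) :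
    S.Countable := by
  choose! b hb hdis hne using h
  refine Set.PairwiseDisjoint.countable_of_isOpen (s := fun x => Set.Ioo x (b x))
    ?_ (fun x _ => isOpen_Ioo) (fun x hx => hne x hx)
  have key : ∀ x ∈ S, ∀ y ∈ S, x < y → Disjoint (Set.Ioo x (b x)) (Set.Ioo y (b y)) := by
    intro x hx y hy hxy
    have hby : b x ≤ y := by
      by_contra hc
      push_neg at hc
      have : y ∈ Set.Ioo x (b x) ∩ S := ⟨⟨hxy, hc⟩, hy⟩
      rw [hdis x hx] at this
      exact this
    refine Set.disjoint_left.2 fun z hz hz' => ?_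
    exact absurd (hz.2.trans_le (hby.trans hz'.1.le)) (lt_irrefl z)
  intro x hx y hy hxy
  rcases lt_or_gt_of_ne hxy with h1 | h1
  · exact key x hx y hy h1
  · exact (key y hy x hx h1).symm

theorem aux_countable_left {α : Type*} [LinearOrder α] [TopologicalSpace α] [OrderTopology α]
    [SecondCountableTopology α] (S : Set α)
    (h : ∀ x ∈ S, ∃ a, a < x ∧ Set.Ioo a x ∩ S = ∅ ∧ (Set.Ioo a x).Nonempty) :
    S.Countable := by
  choose! a ha hdis hne using h
  refine Set.PairwiseDisjoint.countable_of_isOpen (s := fun x => Set.Ioo (a x) x)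
    ?_ (fun x _ => isOpen_Ioo) (fun x hx => hne x hx)
  have key : ∀ x ∈ S, ∀ y ∈ S, x < y → Disjoint (Set.Ioo (a x) x) (Set.Ioo (a y) y) := by
    intro x hx y hy hxy
    have hay : x ≤ a y := by
      by_contra hc
      push_neg at hc
      have : x ∈ Set.Ioo (a y) y ∩ S := ⟨⟨hc, hxy⟩, hx⟩
      rw [hdis y hy] at this
      exact this
    refine Set.disjoint_left.2 fun z hz hz' => ?_
    exact absurd (hz.2.trans_le (hay.trans hz'.1.le)) (lt_irrefl z)
  intro x hx y hy hxy
  rcases lt_or_gt_of_ne hxy with h1 | h1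
  · exact key x hx y hy h1
  · exact (key y hy x hx h1).symm

/-- The double arrow space: `[0,1] × {0,1}` with the order topology of the
lexicographic order. -/
abbrev DoubleArrow : Type := ↥(Set.Icc (0:ℝ) 1) ×ₗ Fin 2

noncomputable instance : TopologicalSpace DoubleArrow := Preorder.topology DoubleArrow

instance : OrderTopology DoubleArrow := ⟨rfl⟩

/-- For every open set `A` in the double arrow space the symmetric difference
`A⁺ Δ A⁻` is countable, where `A⁺ = {x : (x,1) ∈ A}` and `A⁻ = {x : (x,0) ∈ A}`. -/
theorem doubleArrow_isOpen_symmDiff_countable (A : Set DoubleArrow) (hA : IsOpen A) :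
    Set.Countable
      ({x : ↥(Set.Icc (0:ℝ) 1) | (toLex (x, (1 : Fin 2)) : DoubleArrow) ∈ A} ∆
       {x : ↥(Set.Icc (0:ℝ) 1) | (toLex (x, (0 : Fin 2)) : DoubleArrow) ∈ A}) := by
  set I := ↥(Set.Icc (0:ℝ) 1)
  set top : I := ⟨1, by norm_num⟩
  set bot : I := ⟨0, by norm_num⟩
  set S1 : Set I := {x | (toLex (x, (1 : Fin 2)) : DoubleArrow) ∈ A ∧
      (toLex (x, (0 : Fin 2)) : DoubleArrow) ∉ A}
  set S2 : Set I := {x | (toLex (x, (0 : Fin 2)) : DoubleArrow) ∈ A ∧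
      (toLex (x, (1 : Fin 2)) : DoubleArrow) ∉ A}
  have hS1 : (S1 \ {top}).Countable := by
    apply aux_countable_right
    rintro x ⟨⟨hx1, hx0⟩, hxt⟩
    have hxtop : x < top := lt_of_le_of_ne (Subtype.coe_le_coe.mp x.2.2) (by simpa using hxt)
    have hmem : A ∈ nhds (toLex ((x, (1 : Fin 2)) : I × Fin 2) : DoubleArrow) := hA.mem_nhds hx1
    have hex : ∃ u : DoubleArrow, (toLex ((x, (1 : Fin 2)) : I × Fin 2) : DoubleArrow) < u :=
      ⟨toLex (top, 0), Prod.Lex.lt_iff.2 (Or.inl hxtop)⟩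
    obtain ⟨u, hu, hIco⟩ := exists_Ico_subset_of_mem_nhds hmem hex
    have hu' := hu
    rw [show u = toLex (ofLex u) from rfl, Prod.Lex.lt_iff] at hu'
    have hxb : x < (ofLex u).1 := by
      rcases hu' with h | ⟨_, h⟩
      · exact h
      · exact absurd h (not_lt.2 (Fin.le_last _))
    refine ⟨(ofLex u).1, hxb, ?_, nonempty_Ioo.2 hxb⟩
    ext z
    simp only [Set.mem_inter_iff, Set.mem_Ioo, Set.mem_empty_iff_false, iff_false, not_and]
    rintro ⟨hxz, hzb⟩ ⟨⟨_, hz0⟩, _⟩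
    apply hz0
    apply hIco
    constructor
    · exact le_of_lt (Prod.Lex.lt_iff.2 (Or.inl hxz))
    · rw [show u = toLex (ofLex u) from rfl]
      exact Prod.Lex.lt_iff.2 (Or.inl hzb)
  have hS2 : (S2 \ {bot}).Countable := by
    apply aux_countable_left
    rintro x ⟨⟨hx0, hx1⟩, hxb⟩
    have hxbot : bot < x := lt_of_le_of_ne (Subtype.coe_le_coe.mp x.2.1) (by
      intro h; exact hxb (by simpa using h.symm))
    have hmem : A ∈ nhds (toLex ((x, (0 : Fin 2)) : I × Fin 2) : DoubleArrow) := hA.mem_nhds hx0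
    have hex : ∃ l : DoubleArrow, l < (toLex ((x, (0 : Fin 2)) : I × Fin 2) : DoubleArrow) :=
      ⟨toLex (bot, 0), Prod.Lex.lt_iff.2 (Or.inl hxbot)⟩
    obtain ⟨l, hl, hIoc⟩ := exists_Ioc_subset_of_mem_nhds hmem hex
    have hl' := hl
    rw [show l = toLex (ofLex l) from rfl, Prod.Lex.lt_iff] at hl'
    have hax : (ofLex l).1 < x := by
      rcases hl' with h | ⟨_, h⟩
      · exact h
      · exact absurd h (Fin.not_lt_zero _)
    refine ⟨(ofLex l).1, hax, ?_, nonempty_Ioo.2 hax⟩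
    ext z
    simp only [Set.mem_inter_iff, Set.mem_Ioo, Set.mem_empty_iff_false, iff_false, not_and]
    rintro ⟨haz, hzx⟩ ⟨⟨_, hz1⟩, _⟩
    apply hz1
    apply hIoc
    constructor
    · rw [show l = toLex (ofLex l) from rfl]
      exact Prod.Lex.lt_iff.2 (Or.inl haz)
    · exact le_of_lt (Prod.Lex.lt_iff.2 (Or.inl hzx))
  have h1 : S1.Countable := ((hS1.insert top).mono (by
    intro z hz
    by_cases h : z = top
    · exact h ▸ Set.mem_insert _ _
    · exact Set.mem_insert_of_mem _ ⟨hz, h⟩))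
  have h2 : S2.Countable := ((hS2.insert bot).mono (by
    intro z hz
    by_cases h : z = bot
    · exact h ▸ Set.mem_insert _ _
    · exact Set.mem_insert_of_mem _ ⟨hz, h⟩))
  have : ({x : I | (toLex (x, (1 : Fin 2)) : DoubleArrow) ∈ A} ∆
       {x : I | (toLex (x, (0 : Fin 2)) : DoubleArrow) ∈ A}) ⊆ S1 ∪ S2 := by
    intro z hz
    rcases hz with ⟨h, h'⟩ | ⟨h, h'⟩
    · exact Or.inl ⟨h, h'⟩
    · exact Or.inr ⟨h, h'⟩
  exact (h1.union h2).mono this
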